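/- Fix n ≥ 1, 1 ≤ r ≤ n+1, and a with 1 = a_0 ≤ a_1 < ... < a_r ≤ a_{r+1} = n+1. Define, for k ∈ {1,...,n}, s ∈ ℤ^n, and i ∈ {0,...,r}: ω_k(e_i, s) = -k·s_k if 1 ≤ k < a_i; ω_k(e_i, s) = ((n+1)/2 - k)·s_k + ((n+1)/2)·|s_k| if a_i ≤ k < a_{i+1}; ω_k(e_i, s) = (n+1-k)·s_k if a_{i+1} ≤ k ≤ n. Extend linearly: ω_k(v, s) = Σ_i v_i·ω_k(e_i, s) for v ∈ V. Then for any weakly increasing b with b_0 = 1, b_{r+1} = n+1, any j and any k with a_j ≤ k < a_{j+1}: if s_k ≥ 0 then ω_k(v_b, s) = -|s_k|·((k+1-b_{j+1})(n+1) - k), and if s_k ≤ 0 then ω_k(v_b, s) = |s_k|·((k+1-b_j)(n+1) - k), where v_b = (b_1-b_0, ..., b_{r+1}-b_r). -/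

import Mathlib

/-- The weight `ω_k(e_i, s)`: `-k·s_k` for `k < a_i`, the (integer-valued) middle
expression `((n+1)/2 - k)s_k + ((n+1)/2)|s_k| = max((n+1-k)s_k, -k·s_k)` for
`a_i ≤ k < a_{i+1}`, and `(n+1-k)s_k` for `k ≥ a_{i+1}`. -/
def omegaE (n : ℕ) (a : ℕ → ℤ) (s : ℕ → ℤ) (i k : ℕ) : ℤ :=
  if (k : ℤ) < a i then -(k : ℤ) * s k
  else if (k : ℤ) < a (i + 1) then max (((n : ℤ) + 1 - k) * s k) (-(k : ℤ) * s k)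
  else ((n : ℤ) + 1 - k) * s k

/-- Linear extension `ω_k(v, s) = Σ_i v_i ω_k(e_i, s)`. -/
def omegaV (n r : ℕ) (a : ℕ → ℤ) (s : ℕ → ℤ) (v : ℕ → ℤ) (k : ℕ) : ℤ :=
  ∑ i ∈ Finset.range (r + 1), v i * omegaE n a s i k

/-- For `b` weakly increasing with endpoints `1, n+1`, `a_j ≤ k < a_{j+1}`:
if `s_k ≥ 0` then `ω_k(v_b, s) = -|s_k|((k+1-b_{j+1})(n+1) - k)`, and if `s_k ≤ 0`
then `ω_k(v_b, s) = |s_k|((k+1-b_j)(n+1) - k)`. -/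
theorem stmt_4 (n r : ℕ) (hn : 1 ≤ n) (hr1 : 1 ≤ r) (hr2 : r ≤ n + 1)
    (a b : ℕ → ℤ) (s : ℕ → ℤ)
    (ha0 : a 0 = 1) (haLast : a (r + 1) = (n : ℤ) + 1)
    (ha01 : a 0 ≤ a 1) (haStrict : ∀ i, 1 ≤ i → i < r → a i < a (i + 1))
    (haEnd : a r ≤ a (r + 1))
    (hb0 : b 0 = 1) (hbLast : b (r + 1) = (n : ℤ) + 1)
    (hbMono : ∀ i, i ≤ r → b i ≤ b (i + 1))
    (j : ℕ) (hj : j ≤ r) (k : ℕ) (hk1 : 1 ≤ k) (hk2 : k ≤ n)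
    (hka : a j ≤ (k : ℤ)) (hka' : (k : ℤ) < a (j + 1)) :
    (0 ≤ s k → omegaV n r a s (fun i => b (i + 1) - b i) k =
      -|s k| * (((k : ℤ) + 1 - b (j + 1)) * ((n : ℤ) + 1) - k)) ∧
    (s k ≤ 0 → omegaV n r a s (fun i => b (i + 1) - b i) k =
      |s k| * (((k : ℤ) + 1 - b j) * ((n : ℤ) + 1) - k)) := by
  -- step monotonicity of a
  have hstep : ∀ i, i ≤ r → a i ≤ a (i + 1) := by
    intro i hi
    rcases Nat.eq_zero_or_pos i with h0 | h1
    · subst h0; exact ha01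
    rcases eq_or_lt_of_le hi with he | hlt
    · subst he; exact haEnd
    · exact le_of_lt (haStrict i h1 hlt)
  have hmono : ∀ p q, p ≤ q → q ≤ r + 1 → a p ≤ a q := by
    intro p q hpq hq
    induction q with
    | zero => simp [Nat.le_zero.mp hpq]
    | succ m ih =>
      rcases Nat.lt_or_ge p (m + 1) with h | h
      · exact le_trans (ih (Nat.lt_succ_iff.mp h) (by omega)) (hstep m (by omega))
      · have : p = m + 1 := le_antisymm hpq h
        subst this; exact le_refl _
  set A : ℤ := ((n : ℤ) + 1 - k) * s k with hA
  set B : ℤ := -(k : ℤ) * s k with hB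
  have h1 : ∀ i, i < j → omegaE n a s i k = A := by
    intro i hi
    have hik : a (i + 1) ≤ (k : ℤ) := le_trans (hmono (i + 1) j hi (by omega)) hka
    have hik0 : a i ≤ (k : ℤ) := le_trans (hstep i (by omega)) hik
    unfold omegaE
    rw [if_neg (not_lt.mpr hik0), if_neg (not_lt.mpr hik)]
  have h2 : omegaE n a s j k = max A B := by
    unfold omegaE
    rw [if_neg (not_lt.mpr hka), if_pos hka']
  have h3 : ∀ i, j < i → i ≤ r → omegaE n a s i k = B := by
    intro i hi hir
    have hk' : (k : ℤ) < a i := lt_of_lt_of_le hka' (hmono (j + 1) i hi (by omega))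
    unfold omegaE
    rw [if_pos hk']
  -- split the sum
  have hsplit1 : ∑ i ∈ Finset.range (r + 1), (b (i + 1) - b i) * omegaE n a s i k
      = ∑ i ∈ Finset.Ico 0 (j + 1), (b (i + 1) - b i) * omegaE n a s i k
        + ∑ i ∈ Finset.Ico (j + 1) (r + 1), (b (i + 1) - b i) * omegaE n a s i k := by
    rw [Finset.range_eq_Ico,
      Finset.sum_Ico_consecutive _ (Nat.zero_le (j + 1)) (by omega : j + 1 ≤ r + 1)]
  have hsplit2 : ∑ i ∈ Finset.Ico 0 (j + 1), (b (i + 1) - b i) * omegaE n a s i k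
      = ∑ i ∈ Finset.range j, (b (i + 1) - b i) * omegaE n a s i k
        + (b (j + 1) - b j) * omegaE n a s j k := by
    rw [← Finset.range_eq_Ico, Finset.sum_range_succ]
  have e1 : ∑ i ∈ Finset.range j, (b (i + 1) - b i) * omegaE n a s i k
      = (b j - b 0) * A := by
    rw [Finset.sum_congr rfl (fun i hi => by
      rw [h1 i (Finset.mem_range.mp hi)]), ← Finset.sum_mul, Finset.sum_range_sub b j]
  have e3 : ∑ i ∈ Finset.Ico (j + 1) (r + 1), (b (i + 1) - b i) * omegaE n a s i k
      = (b (r + 1) - b (j + 1)) * B := by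
    rw [Finset.sum_congr rfl (fun i hi => by
      have := Finset.mem_Ico.mp hi
      rw [h3 i (by omega) (by omega)]), ← Finset.sum_mul]
    congr 1
    have t1 : ∑ i ∈ Finset.range (r + 1), (b (i + 1) - b i) = b (r + 1) - b 0 :=
      Finset.sum_range_sub b (r + 1)
    have t2 : ∑ i ∈ Finset.range (j + 1), (b (i + 1) - b i) = b (j + 1) - b 0 :=
      Finset.sum_range_sub b (j + 1)
    have t3 : ∑ i ∈ Finset.range (j + 1), (b (i + 1) - b i)
        + ∑ i ∈ Finset.Ico (j + 1) (r + 1), (b (i + 1) - b i)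
        = ∑ i ∈ Finset.range (r + 1), (b (i + 1) - b i) := by
      simp only [Finset.range_eq_Ico]
      exact Finset.sum_Ico_consecutive (fun i => b (i + 1) - b i) (Nat.zero_le (j + 1)) (by omega : j + 1 ≤ r + 1)
    linarith
  have hsum : omegaV n r a s (fun i => b (i + 1) - b i) k
      = (b j - b 0) * A + (b (j + 1) - b j) * (max A B) + (b (r + 1) - b (j + 1)) * B := by
    unfold omegaV
    simp only []
    rw [hsplit1, hsplit2, e1, e3, h2]
  constructor
  · intro hs
    have hmax : max A B = A := max_eq_left (by
      rw [hA, hB]; nlinarith [hs, Int.natCast_nonneg n])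
    rw [hsum, hmax, abs_of_nonneg hs, hb0, hbLast, hA, hB]
    ring
  · intro hs
    have hmax : max A B = B := max_eq_right (by
      rw [hA, hB]; nlinarith [hs, Int.natCast_nonneg n])
    rw [hsum, hmax, abs_of_nonpos hs, hb0, hbLast, hA, hB]
    ring
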